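/- arXiv:1612.01681 — 17 statements merged into one kernel-verified Lean document; each statement's English description precedes it below -/
import Mathlib

section
/- If R is a p.q.-Baer *-ring (possibly not assumed unital a priori), then R has a unity element. -/
/-- If `R` is a p.q.-Baer *-ring (not assumed unital), then `R` has a unity element. -/
theorem pqBaer_has_unity (R : Type*) [NonUnitalRing R] [StarRing R]
    (hpq : ∀ a : R, ∃ e : R, (e * e = e ∧ star e = e) ∧
      ∀ y : R, (∀ r : R, a * r * y = 0) ↔ ∃ t : R, y = e * t) :
    ∃ u : R, ∀ x : R, u * x = x ∧ x * u = x := by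
  obtain ⟨e, ⟨hidem, hstar⟩, h⟩ := hpq 0
  have left : ∀ x : R, e * x = x := by
    intro x
    obtain ⟨t, ht⟩ := (h x).mp (fun r => by simp)
    rw [ht, ← mul_assoc, hidem]
  refine ⟨e, fun x => ⟨left x, ?_⟩⟩
  have := congrArg star (left (star x))
  rwa [star_mul, hstar, star_star] at this
end

section
/- In a p.q.-Baer *-ring R, any projection k satisfying r_R(zR) = kR for some z ∈ R is central, i.e., kr = rk for all r ∈ R. -/
/-- In a p.q.-Baer *-ring, any projection `k` with `r_R(zR) = kR` is central. -/
theorem pqBaer_annihilator_projection_central (R : Type*) [Ring R] [StarRing R]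
    (hpq : ∀ a : R, ∃ e : R, (e * e = e ∧ star e = e) ∧
      ∀ y : R, (∀ r : R, a * r * y = 0) ↔ ∃ t : R, y = e * t)
    (k z : R) (hk : k * k = k ∧ star k = k)
    (hkz : ∀ y : R, (∀ r : R, z * r * y = 0) ↔ ∃ t : R, y = k * t) :
    ∀ r : R, k * r = r * k := by
  obtain ⟨hk2, hks⟩ := hk
  -- z * s * k = 0 for all s
  have hz : ∀ s : R, z * s * k = 0 := (hkz k).mpr ⟨1, (mul_one k).symm⟩
  -- k * r * k = r * k for all r
  have h1 : ∀ r : R, k * (r * k) = r * k := by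
    intro r
    obtain ⟨t, ht⟩ := (hkz (r * k)).mp (fun s => by
      rw [← mul_assoc, mul_assoc z s r, hz])
    rw [ht, ← mul_assoc, hk2]
  -- k * r * k = k * r for all r, via star
  have h2 : ∀ r : R, k * (r * k) = k * r := by
    intro r
    have h := congrArg star (h1 (star r))
    exact (by simpa [star_mul, hks, mul_assoc] using h : k * (r * k) = k * r)
  intro r
  rw [← h2 r, h1 r]
end

section
/- If R is a p.q.-Baer *-ring, then the involution of R is semi-proper, i.e., aRa* ≠ 0 for every nonzero a ∈ R. -/
/-- If `R` is a p.q.-Baer *-ring, then the involution of `R` is semi-proper. -/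
theorem pqBaer_semiproper (R : Type*) [Ring R] [StarRing R]
    (hpq : ∀ a : R, ∃ e : R, (e * e = e ∧ star e = e) ∧
      ∀ y : R, (∀ r : R, a * r * y = 0) ↔ ∃ t : R, y = e * t) :
    ∀ a : R, (∀ r : R, a * r * star a = 0) → a = 0 := by
  intro a ha
  obtain ⟨e, ⟨hidem, hstar⟩, hann⟩ := hpq a
  -- star a ∈ eR
  obtain ⟨t, ht⟩ := (hann (star a)).mp ha
  -- e ∈ eR, so a * e = 0
  have he : a * e = 0 := by
    have := (hann e).mpr ⟨e, hidem.symm⟩ 1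
    simpa using this
  -- star a = e * star a
  have h1 : star a = e * star a := by
    rw [ht, ← mul_assoc, hidem]
  have h2 : a = a * e := by
    have := congrArg star h1
    simpa [hstar, mul_comm] using this
  rw [h2, he]
end

section
/- Let R be a p.q.-Baer *-ring and x ∈ R. Then x has a central cover e ∈ R, i.e., e is the smallest central projection with xe = x; moreover for all y ∈ R: xRy = 0 iff ey = 0. -/
/-- In a p.q.-Baer *-ring, every element `x` has a central cover `e` (the smallest
central projection with `x * e = x`), and `xRy = 0` iff `e * y = 0`. -/
theorem pqBaer_central_cover (R : Type*) [Ring R] [StarRing R]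
    (hpq : ∀ a : R, ∃ e : R, (e * e = e ∧ star e = e) ∧
      ∀ y : R, (∀ r : R, a * r * y = 0) ↔ ∃ t : R, y = e * t)
    (x : R) :
    ∃ e : R, (e * e = e ∧ star e = e) ∧ (∀ r : R, e * r = r * e) ∧ x * e = x ∧
      (∀ f : R, (f * f = f ∧ star f = f) → (∀ r : R, f * r = r * f) → x * f = x →
        e * f = e) ∧
      (∀ y : R, (∀ r : R, x * r * y = 0) ↔ e * y = 0) := by
  obtain ⟨g, ⟨hgg, hgs⟩, hg⟩ := hpq x
  -- g annihilates xR on the right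
  have hann : ∀ r : R, x * r * g = 0 := (hg g).mpr ⟨g, hgg.symm⟩
  -- gR is a two-sided ideal: g absorbs left multiples
  have habs : ∀ s : R, g * (s * g) = s * g := by
    intro s
    obtain ⟨t, ht⟩ := (hg (s * g)).mp (fun r' => by
      simpa [mul_assoc] using hann (r' * s))
    rw [ht, ← mul_assoc, hgg]
  have h1 : ∀ s : R, g * s * g = s * g := fun s => by rw [mul_assoc]; exact habs s
  -- g is central
  have hcen : ∀ r : R, g * r = r * g := by
    intro r
    have h2 : g * r * g = g * r := by
      have h := h1 (star r)
      have := congrArg star h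
      simpa [star_mul, hgs, mul_assoc] using this
    rw [← h2, h1]
  have hxg : x * g = 0 := by have := hann 1; rwa [mul_one] at this
  refine ⟨1 - g, ⟨by simp [mul_sub, sub_mul, hgg], by simp [star_sub, hgs]⟩,
    fun r => by simp [mul_sub, sub_mul, hcen r], by simp [mul_sub, hxg],
    fun f ⟨hff, hfs⟩ hfc hxf => ?_, fun y => ?_⟩
  · -- minimality
    obtain ⟨t, ht⟩ := (hg (1 - f)).mp (fun r => by
      have : x * r * f = x * r := by
        rw [mul_assoc, ← hfc r, ← mul_assoc, hxf]
      simp [mul_sub, this])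
    have hz : (1 - g) * (1 - f) = 0 := by
      rw [ht, sub_mul, one_mul, ← mul_assoc, hgg, sub_self]
    have := hz
    calc (1 - g) * f = (1 - g) - (1 - g) * (1 - f) := by noncomm_ring
    _ = 1 - g := by rw [hz, sub_zero]
  · constructor
    · intro h
      obtain ⟨t, ht⟩ := (hg y).mp h
      rw [ht, ← mul_assoc, sub_mul, one_mul, hgg, sub_self, zero_mul]
    · intro h
      have hy : g * y = y := by
        have : (1 - g) * y = 0 := h
        rw [sub_mul, one_mul, sub_eq_zero] at this
        exact this.symm
      exact (hg y).mpr ⟨y, hy.symm⟩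
end

section
/- Let R be a p.q.-Baer *-ring, x ∈ R, and e = C(x) its central cover. Then r_R(xR) = r_R(eR) = l_R(Rx) = l_R(Re) = (1-e)R = R(1-e). -/
private lemma pq_key (R : Type*) [Ring R] [StarRing R]
    (hpq : ∀ a : R, ∃ g : R, (g * g = g ∧ star g = g) ∧
      ∀ y : R, (∀ r : R, a * r * y = 0) ↔ ∃ t : R, y = g * t)
    (a e : R) (hp : e * e = e) (hc : ∀ r : R, e * r = r * e) (hae : a * e = a)
    (hmin : ∀ f : R, (f * f = f ∧ star f = f) → (∀ r : R, f * r = r * f) → a * f = a →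
        e * f = e) :
    ∀ y : R, (∀ r : R, a * r * y = 0) ↔ e * y = 0 := by
  obtain ⟨g, ⟨hg2, hgs⟩, hgr⟩ := hpq a
  -- g ∈ r(aR)
  have hag : ∀ r : R, a * r * g = 0 := (hgr g).mpr ⟨g, hg2.symm⟩
  -- g (r g) = r g for all r
  have hA : ∀ r : R, g * (r * g) = r * g := by
    intro r
    obtain ⟨t, ht⟩ := (hgr (r * g)).mp (by
      intro s
      have h := hag (s * r)
      calc a * s * (r * g) = a * (s * r) * g := by noncomm_ring
        _ = 0 := h)
    rw [ht, ← mul_assoc, hg2]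
  -- g s g = g s for all s  (via star)
  have hB : ∀ s : R, g * s * g = g * s := by
    intro s
    have h := hA (star s)
    have := congrArg star h
    simpa [star_mul, hgs, mul_assoc] using this
  have hgc : ∀ r : R, g * r = r * g := by
    intro r
    rw [← hB r, mul_assoc, hA r]
  -- 1 - g is a central projection with a*(1-g) = a, so e*(1-g) = e, i.e. e*g = 0
  have h1g : e * g = 0 := by
    have h := hmin (1 - g) ⟨by noncomm_ring [hg2], by simp [hgs]⟩
      (fun r => by simp [mul_sub, sub_mul, hgc r])
      (by
        have h0 : a * g = 0 := by simpa using hag 1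
        rw [mul_sub, mul_one, h0, sub_zero])
    have h2 : e - e * g = e := by
      calc e - e * g = e * (1 - g) := by noncomm_ring
        _ = e := h
    exact sub_eq_self.mp h2
  -- 1 - e ∈ gR
  have h1e : ∃ t : R, (1 - e) = g * t := (hgr (1 - e)).mp (by
    intro r
    rw [mul_sub, mul_one, mul_assoc, ← hc r, ← mul_assoc, hae, sub_self])
  have hge : g = 1 - e := by
    obtain ⟨t, ht⟩ := h1e
    have h2 : g * (1 - e) = 1 - e := by rw [ht, ← mul_assoc, hg2]
    have h3 : g * e = 0 := by rw [hgc e]; exact h1g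
    calc g = g * (1 - e) + g * e := by noncomm_ring
      _ = 1 - e := by rw [h2, h3, add_zero]
  intro y
  rw [hgr y, hge]
  constructor
  · rintro ⟨t, rfl⟩
    have h4 : e * ((1 - e) * t) = (e - e * e) * t := by noncomm_ring
    rw [h4, hp, sub_self, zero_mul]
  · intro h
    exact ⟨y, by rw [sub_mul, one_mul, h, sub_zero]⟩

/-- Let `R` be a p.q.-Baer *-ring, `x ∈ R`, and `e = C(x)` its central cover.  Then
`r_R(xR) = r_R(eR) = l_R(Rx) = l_R(Re) = (1-e)R = R(1-e)`. -/
theorem pqBaer_annihilators_eq (R : Type*) [Ring R] [StarRing R]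
    (hpq : ∀ a : R, ∃ e : R, (e * e = e ∧ star e = e) ∧
      ∀ y : R, (∀ r : R, a * r * y = 0) ↔ ∃ t : R, y = e * t)
    (x e : R)
    (he : (e * e = e ∧ star e = e) ∧ (∀ r : R, e * r = r * e) ∧ x * e = x ∧
      ∀ f : R, (f * f = f ∧ star f = f) → (∀ r : R, f * r = r * f) → x * f = x →
        e * f = e) :
    ∀ y : R,
      ((∀ r : R, x * r * y = 0) ↔ (∀ r : R, e * r * y = 0)) ∧
      ((∀ r : R, x * r * y = 0) ↔ (∀ r : R, y * r * x = 0)) ∧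
      ((∀ r : R, x * r * y = 0) ↔ (∀ r : R, y * r * e = 0)) ∧
      ((∀ r : R, x * r * y = 0) ↔ ∃ t : R, y = (1 - e) * t) ∧
      ((∀ r : R, x * r * y = 0) ↔ ∃ t : R, y = t * (1 - e)) := by
  obtain ⟨⟨hp, hs⟩, hc, hxe, hmin⟩ := he
  have Hx : ∀ y : R, (∀ r : R, x * r * y = 0) ↔ e * y = 0 :=
    pq_key R hpq x e hp hc hxe hmin
  -- e is also the central cover of star x
  have hsxe : star x * e = star x := by
    have h := congrArg star hxe
    rw [star_mul, hs] at h
    rw [← hc (star x)]; exact h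
  have hmins : ∀ f : R, (f * f = f ∧ star f = f) → (∀ r : R, f * r = r * f) →
      star x * f = star x → e * f = e := by
    intro f hf hfc hxf
    apply hmin f hf hfc
    have h := congrArg star hxf
    rw [star_mul, hf.2, star_star] at h
    calc x * f = f * x := (hfc x).symm
      _ = x := h
  have Hsx : ∀ y : R, (∀ r : R, star x * r * y = 0) ↔ e * y = 0 :=
    pq_key R hpq (star x) e hp hc hsxe hmins
  intro y
  have hsy : e * star y = 0 ↔ e * y = 0 := by
    constructor
    · intro h
      have h2 := congrArg star h
      rw [star_mul, star_star, hs, star_zero] at h2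
      rw [hc y]; exact h2
    · intro h
      have h2 := congrArg star h
      rw [star_mul, hs, star_zero] at h2
      rw [hc (star y)]; exact h2
  rw [Hx y]
  refine ⟨?_, ?_, ?_, ?_, ?_⟩
  · constructor
    · intro h r
      rw [hc r, mul_assoc, h, mul_zero]
    · intro h
      simpa using h 1
  · constructor
    · intro h r
      have h2 : ∀ s : R, star x * s * star y = 0 := by
        rw [Hsx (star y), hsy]; exact h
      have h6 := congrArg star (h2 (star r))
      simpa [star_mul, mul_assoc] using h6
    · intro h
      rw [← hsy, ← Hsx (star y)]
      intro r
      have h2 := congrArg star (h (star r))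
      simpa [star_mul, mul_assoc] using h2
  · constructor
    · intro h r
      have h' : y * e = 0 := by rw [← hc y]; exact h
      rw [mul_assoc, ← hc r, ← mul_assoc, h', zero_mul]
    · intro h
      rw [hc y]
      simpa using h 1
  · constructor
    · intro h
      exact ⟨y, by rw [sub_mul, one_mul, h, sub_zero]⟩
    · rintro ⟨t, rfl⟩
      have h4 : e * ((1 - e) * t) = (e - e * e) * t := by noncomm_ring
      rw [h4, hp, sub_self, zero_mul]
  · have hcen : ∀ t : R, t * (1 - e) = (1 - e) * t := by
      intro t
      rw [mul_sub, sub_mul, mul_one, one_mul, hc t]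
    constructor
    · intro h
      refine ⟨y, ?_⟩
      rw [hcen, sub_mul, one_mul, h, sub_zero]
    · rintro ⟨t, rfl⟩
      rw [hcen]
      have h4 : e * ((1 - e) * t) = (e - e * e) * t := by noncomm_ring
      rw [h4, hp, sub_self, zero_mul]
end

section
/- In a p.q.-Baer *-ring R, C(x) = C(x*) for every x ∈ R. -/
/-- In a p.q.-Baer *-ring, `C(x) = C(x*)`. -/
theorem pqBaer_central_cover_star (R : Type*) [Ring R] [StarRing R]
    (hpq : ∀ a : R, ∃ e : R, (e * e = e ∧ star e = e) ∧
      ∀ y : R, (∀ r : R, a * r * y = 0) ↔ ∃ t : R, y = e * t)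
    (x e f : R)
    (he : (e * e = e ∧ star e = e) ∧ (∀ r : R, e * r = r * e) ∧ x * e = x ∧
      ∀ g : R, (g * g = g ∧ star g = g) → (∀ r : R, g * r = r * g) → x * g = x →
        e * g = e)
    (hf : (f * f = f ∧ star f = f) ∧ (∀ r : R, f * r = r * f) ∧ star x * f = star x ∧
      ∀ g : R, (g * g = g ∧ star g = g) → (∀ r : R, g * r = r * g) →
        star x * g = star x → f * g = f) :
    e = f := by
  obtain ⟨⟨hee, hse⟩, hce, hxe, hemin⟩ := he
  obtain ⟨⟨hff, hsf⟩, hcf, hxf, hfmin⟩ := hf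
  have hxf' : x * f = x := by
    have := congrArg star hxf
    rw [star_mul, star_star, hsf] at this
    rw [← hcf x]; exact this
  have hxe' : star x * e = star x := by
    have := congrArg star hxe
    rw [star_mul, hse] at this
    rw [← hce (star x)]; exact this
  have h1 : e * f = e := hemin f ⟨hff, hsf⟩ hcf hxf'
  have h2 : f * e = f := hfmin e ⟨hee, hse⟩ hce hxe'
  rw [← h1, ← hcf e, h2]
end

section
/- In a p.q.-Baer *-ring R, for x, y ∈ R: xRy = 0 if and only if C(x)C(y) = 0. -/
/-- In a p.q.-Baer *-ring, `xRy = 0` iff `C(x) * C(y) = 0`. -/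
theorem pqBaer_xRy_iff_covers (R : Type*) [Ring R] [StarRing R]
    (hpq : ∀ a : R, ∃ e : R, (e * e = e ∧ star e = e) ∧
      ∀ y : R, (∀ r : R, a * r * y = 0) ↔ ∃ t : R, y = e * t)
    (x y e f : R)
    (he : (e * e = e ∧ star e = e) ∧ (∀ r : R, e * r = r * e) ∧ x * e = x ∧
      ∀ g : R, (g * g = g ∧ star g = g) → (∀ r : R, g * r = r * g) → x * g = x →
        e * g = e)
    (hf : (f * f = f ∧ star f = f) ∧ (∀ r : R, f * r = r * f) ∧ y * f = y ∧
      ∀ g : R, (g * g = g ∧ star g = g) → (∀ r : R, g * r = r * g) → y * g = y →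
        f * g = f) :
    (∀ r : R, x * r * y = 0) ↔ e * f = 0 := by
  obtain ⟨⟨hee, hse⟩, hec, hxe, hemin⟩ := he
  obtain ⟨⟨hff, hsf⟩, hfc, hyf, hfmin⟩ := hf
  obtain ⟨p, ⟨hpp, hsp⟩, hP⟩ := hpq x
  constructor
  · intro h
    -- x r p = 0 for all r
    have hxp : ∀ r : R, x * r * p = 0 := (hP p).mpr ⟨p, hpp.symm⟩
    -- p is left semicentral
    have hsemi : ∀ s : R, s * p = p * (s * p) := by
      intro s
      obtain ⟨t, ht⟩ := (hP (s * p)).mp (fun r => by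
        rw [← mul_assoc, mul_assoc x r s]; exact hxp (r * s))
      rw [ht, ← mul_assoc, hpp]
    -- hence p is central
    have hpc : ∀ s : R, p * s = s * p := by
      intro s
      have h1 := congrArg star (hsemi (star s))
      simp only [star_mul, hsp, star_star] at h1
      -- h1 : p * s = (p * star s ...) -- to fix after checking
      have h2 : p * s = p * (s * p) := by
        rw [← mul_assoc]; exact h1
      rw [h2, ← hsemi s]
    have hxp0 : x * p = 0 := by simpa using hxp 1
    -- e * p = 0 via minimality of e applied to 1 - p
    have hep : e * (1 - p) = e := by
      refine hemin (1 - p) ⟨?_, ?_⟩ ?_ ?_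
      · rw [sub_mul, one_mul, mul_sub, mul_one, hpp, sub_self, sub_zero]
      · simp [hsp]
      · intro s; rw [sub_mul, mul_sub, one_mul, mul_one, hpc s]
      · rw [mul_sub, mul_one, hxp0, sub_zero]
    have hep0 : e * p = 0 := by
      rw [mul_sub, mul_one] at hep
      exact sub_eq_self.mp hep
    -- y = p * y, hence y * p = y
    obtain ⟨t, ht⟩ := (hP y).mp h
    have hpy : p * y = y := by rw [ht, ← mul_assoc, hpp]
    have hyp : y * p = y := by rw [← hpc y]; exact hpy
    have hfp : f * p = f := hfmin p ⟨hpp, hsp⟩ hpc hyp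
    calc e * f = e * (f * p) := by rw [hfp]
      _ = e * (p * f) := by rw [hpc f]
      _ = e * p * f := by rw [mul_assoc]
      _ = 0 := by rw [hep0, zero_mul]
  · intro hef r
    calc x * r * y = x * e * r * (y * f) := by rw [hxe, hyf]
      _ = x * (r * e) * (y * f) := by rw [mul_assoc x e r, hec r]
      _ = x * r * (e * (y * f)) := by
          rw [← mul_assoc x r e, mul_assoc (x * r) e (y * f)]
      _ = x * r * (e * y * f) := by rw [mul_assoc e y f]
      _ = x * r * (y * e * f) := by rw [hec y]
      _ = x * r * (y * (e * f)) := by rw [mul_assoc y e f]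
      _ = 0 := by rw [hef, mul_zero, mul_zero]
end

section
/- Let R be a p.q.-Baer *-ring whose only central projections are 0 and 1. Then for x, y ∈ R: xRy = 0 if and only if x = 0 or y = 0. -/
/-- In a p.q.-Baer *-ring whose only central projections are `0` and `1`,
`xRy = 0` iff `x = 0` or `y = 0`. -/
theorem pqBaer_trivial_central_projections (R : Type*) [Ring R] [StarRing R]
    (hpq : ∀ a : R, ∃ e : R, (e * e = e ∧ star e = e) ∧
      ∀ y : R, (∀ r : R, a * r * y = 0) ↔ ∃ t : R, y = e * t)
    (hcen : ∀ e : R, (e * e = e ∧ star e = e) → (∀ r : R, e * r = r * e) →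
      e = 0 ∨ e = 1) :
    ∀ x y : R, (∀ r : R, x * r * y = 0) ↔ (x = 0 ∨ y = 0) := by
  intro x y
  constructor
  · intro h
    by_cases hx : x = 0
    · exact Or.inl hx
    obtain ⟨e, ⟨he1, he2⟩, he3⟩ := hpq x
    -- e itself annihilates: ∀ r, x * r * e = 0
    have heann : ∀ r : R, x * r * e = 0 := (he3 e).mpr ⟨1, (mul_one e).symm⟩
    -- e is left semicentral: e * r * e = r * e
    have hsemi : ∀ r : R, e * r * e = r * e := by
      intro r
      obtain ⟨t, ht⟩ := (he3 (r * e)).mp (fun s => by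
        simpa [mul_assoc] using heann (s * r))
      rw [mul_assoc, ht, ← mul_assoc, he1, ← ht]
    -- using star: e * s * e = e * s
    have hstar : ∀ s : R, e * s * e = e * s := by
      intro s
      have := congrArg star (hsemi (star s))
      simpa [star_mul, he2, mul_assoc] using this
    have hcentral : ∀ r : R, e * r = r * e := fun r => by
      rw [← hstar r, hsemi r]
    rcases hcen e ⟨he1, he2⟩ hcentral with h0 | h1
    · obtain ⟨t, ht⟩ := (he3 y).mp h
      right
      rw [ht, h0, zero_mul]
    · exfalso
      apply hx
      have := (he3 1).mpr ⟨1, by rw [h1, one_mul]⟩ 1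
      simpa using this
  · rintro (rfl | rfl) r <;> simp
end

section
/- Let R be a p.q.-Baer *-ring such that C(xy) = C(x)C(y) for all x, y ∈ R. Then R satisfies the *-Insertion of Factors Property: ab = 0 implies aRb* = 0 for all a, b ∈ R. -/
/-- If `R` is a p.q.-Baer *-ring with `C(xy) = C(x)C(y)` for all `x, y`, then `R`
satisfies the `*`-Insertion of Factors Property. -/
theorem pqBaer_multiplicative_cover_starIFP (R : Type*) [Ring R] [StarRing R]
    (hpq : ∀ a : R, ∃ e : R, (e * e = e ∧ star e = e) ∧
      ∀ y : R, (∀ r : R, a * r * y = 0) ↔ ∃ t : R, y = e * t)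
    (C : R → R)
    (hC : ∀ x : R, (C x * C x = C x ∧ star (C x) = C x) ∧
      (∀ r : R, C x * r = r * C x) ∧ x * C x = x ∧
      ∀ g : R, (g * g = g ∧ star g = g) → (∀ r : R, g * r = r * g) → x * g = x →
        C x * g = C x)
    (hmul : ∀ x y : R, C (x * y) = C x * C y) :
    ∀ a b : R, a * b = 0 → ∀ r : R, a * r * star b = 0 := by
  intro a b hab r
  obtain ⟨_, _, _, hmin0⟩ := hC 0
  have hC0 : C 0 = 0 := by
    have := hmin0 0 ⟨by simp, by simp⟩ (fun r => by simp) (by simp)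
    simpa using this.symm
  have hab' : C a * C b = 0 := by rw [← hmul, hab, hC0]
  obtain ⟨_, hcenta, hxa, _⟩ := hC a
  obtain ⟨⟨_, hstarb⟩, _, hxb, _⟩ := hC b
  have hsb : star b = C b * star b := by
    conv_lhs => rw [← hxb]
    rw [star_mul, hstarb]
  calc a * r * star b = (a * C a) * r * (C b * star b) := by rw [hxa, ← hsb]
    _ = a * (r * (C a * C b)) * star b := by
        rw [mul_assoc a (C a) r, hcenta r]; noncomm_ring
    _ = 0 := by rw [hab']; noncomm_ring
end

section
/- Let R be a p.q.-Baer *-ring and (e_i) a family of projections in R having a supremum e in the projection poset. Then for x ∈ R: xRe = 0 if and only if xRe_i = 0 for all i. -/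
/-- In a p.q.-Baer *-ring, if `e` is a supremum (in the projection poset) of a family
of projections `e_i`, then `xRe = 0` iff `xRe_i = 0` for all `i`. -/
theorem pqBaer_sup_annihilation (R : Type*) [Ring R] [StarRing R]
    (hpq : ∀ a : R, ∃ e : R, (e * e = e ∧ star e = e) ∧
      ∀ y : R, (∀ r : R, a * r * y = 0) ↔ ∃ t : R, y = e * t)
    {ι : Type*} (E : ι → R) (hE : ∀ i, E i * E i = E i ∧ star (E i) = E i)
    (e : R) (he : e * e = e ∧ star e = e)
    (hub : ∀ i, E i = E i * e)
    (hlub : ∀ f : R, (f * f = f ∧ star f = f) → (∀ i, E i = E i * f) → e = e * f)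
    (x : R) :
    (∀ r : R, x * r * e = 0) ↔ ∀ i, ∀ r : R, x * r * E i = 0 := by
  constructor
  · intro h i r
    have : x * r * E i = x * (r * E i) * e := by
      conv_lhs => rw [hub i]
      rw [← mul_assoc, mul_assoc x r (E i)]
    rw [this, h]
  · intro h
    obtain ⟨p, ⟨hpp, hps⟩, hp⟩ := hpq x
    -- each E i = E i * p
    have hEp : ∀ i, E i = E i * p := by
      intro i
      obtain ⟨t, ht⟩ := (hp (E i)).mp (h i)
      calc E i = star (E i) := ((hE i).2).symm
        _ = star (p * E i) := by rw [show p * E i = E i by rw [ht, ← mul_assoc, hpp]]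
        _ = star (E i) * star p := by rw [star_mul]
        _ = E i * p := by rw [(hE i).2, hps]
    have hep : e = e * p := hlub p ⟨hpp, hps⟩ hEp
    have hxp : ∀ r : R, x * r * p = 0 := (hp p).mpr ⟨p, hpp.symm⟩
    intro r
    rw [hep, ← mul_assoc, mul_assoc x r e, hxp (r * e)]
end

section
/- Let R be a p.q.-Baer *-ring and B a *-subring of R with B = B'' (the double commutant of B in R). If (e_i) is a family of central projections in B that has a supremum e ∈ R among projections, then e ∈ B. -/
/-- Let `R` be a p.q.-Baer *-ring and `B` a *-subring with `B = B''`.  If a family of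
central projections in `B` has a supremum `e` in `R` among projections, then `e ∈ B`. -/
theorem pqBaer_double_commutant_sup_mem (R : Type*) [Ring R] [StarRing R]
    (hpq : ∀ a : R, ∃ e : R, (e * e = e ∧ star e = e) ∧
      ∀ y : R, (∀ r : R, a * r * y = 0) ↔ ∃ t : R, y = e * t)
    (B : NonUnitalSubring R) (hBstar : ∀ b ∈ B, star b ∈ B)
    (hBdc : ∀ x : R, x ∈ B ↔
      ∀ y : R, (∀ b ∈ B, y * b = b * y) → x * y = y * x)
    {ι : Type*} (E : ι → R)
    (hEB : ∀ i, E i ∈ B)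
    (hE : ∀ i, E i * E i = E i ∧ star (E i) = E i)
    (hEcen : ∀ i, ∀ r : R, E i * r = r * E i)
    (e : R) (he : e * e = e ∧ star e = e)
    (hub : ∀ i, E i = E i * e)
    (hlub : ∀ f : R, (f * f = f ∧ star f = f) → (∀ i, E i = E i * f) → e = e * f) :
    e ∈ B := by
  -- key: any y commuting with B satisfies y*e = e*y*e
  have key : ∀ y : R, (∀ b ∈ B, y * b = b * y) → y * e = e * y * e := by
    intro y hy
    set a : R := y * e - e * y * e with ha
    obtain ⟨g, ⟨hg, hgs⟩, hann⟩ := hpq a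
    have heE : ∀ i, e * E i = E i := by
      intro i
      rw [← hEcen i e, ← hub i]
    have haE : ∀ i, ∀ r : R, a * r * E i = 0 := by
      intro i r
      have h1 : a * E i = 0 := by
        have hyE : y * E i = E i * y := (hEcen i y).symm
        calc a * E i = y * (e * E i) - e * (y * (e * E i)) := by
              rw [ha]; noncomm_ring
          _ = 0 := by rw [heE i, hyE, ← mul_assoc, heE i, hEcen i y, sub_self]
      calc a * r * E i = a * E i * r := by rw [mul_assoc, ← hEcen i r, ← mul_assoc]
        _ = 0 := by rw [h1, zero_mul]
    have hEg : ∀ i, E i = E i * g := by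
      intro i
      obtain ⟨t, ht⟩ := (hann (E i)).mp (haE i)
      have : g * E i = E i := by rw [ht, ← mul_assoc, hg]
      rw [hEcen i g, this]
    have heg : e = e * g := hlub g ⟨hg, hgs⟩ hEg
    have hag : ∀ r : R, a * r * g = 0 := (hann g).mpr ⟨g, hg.symm⟩
    have h0 : a = 0 := by
      have h1 : a * g = 0 := by
        have := hag 1
        rwa [mul_one] at this
      have h2 : a * g = a := by
        rw [ha]
        calc (y * e - e * y * e) * g = y * (e * g) - e * (y * (e * g)) := by
              noncomm_ring
          _ = y * e - e * y * e := by rw [← heg, mul_assoc]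
      rw [← h2, h1]
    exact sub_eq_zero.mp h0
  rw [hBdc]
  intro y hy
  have hsy : ∀ b ∈ B, star y * b = b * star y := by
    intro b hb
    have h1 : y * star b = star b * y := hy (star b) (hBstar b hb)
    calc star y * b = star (star b * y) := by rw [star_mul, star_star]
      _ = star (y * star b) := by rw [h1]
      _ = b * star y := by rw [star_mul, star_star]
  have k1 : y * e = e * y * e := key y hy
  have k2 : star y * e = e * star y * e := key (star y) hsy
  have k2' : e * y = e * y * e := by
    have := congrArg star k2
    simpa [star_mul, he.2, mul_assoc] using this
  rw [k1, ← k2']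
end

section
/- A *-ring R is a p.q.-Baer *-ring if and only if (a) R has a unity element, and (b) for each x ∈ R there exists a central projection e ∈ R such that r_R(xR) = r_R(eR). -/
/-- A *-ring `R` is a p.q.-Baer *-ring iff `R` has a unity element and for each `x`
there is a central projection `e` with `r_R(xR) = r_R(eR)`. -/
theorem pqBaer_iff_unity_and_central (R : Type*) [NonUnitalRing R] [StarRing R] :
    (∀ x : R, ∃ e : R, (e * e = e ∧ star e = e) ∧
      ∀ y : R, (∀ r : R, x * r * y = 0) ↔ ∃ t : R, y = e * t)
    ↔ ((∃ u : R, ∀ x : R, u * x = x ∧ x * u = x) ∧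
      ∀ x : R, ∃ e : R, (e * e = e ∧ star e = e) ∧ (∀ r : R, e * r = r * e) ∧
        ∀ y : R, (∀ r : R, x * r * y = 0) ↔ (∀ r : R, e * r * y = 0)) := by
  constructor
  · intro h
    -- get a unit from x = 0
    obtain ⟨u, ⟨huid, hustar⟩, hu⟩ := h 0
    have hleft : ∀ y : R, u * y = y := by
      intro y
      obtain ⟨t, ht⟩ := (hu y).mp (by intro r; simp)
      rw [ht, ← mul_assoc, huid]
    have hright : ∀ y : R, y * u = y := by
      intro y
      have := congrArg star (hleft (star y))
      rwa [star_mul, star_star, hustar] at this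
    refine ⟨⟨u, fun x => ⟨hleft x, hright x⟩⟩, ?_⟩
    intro x
    obtain ⟨e, ⟨heidem, hestar⟩, he⟩ := h x
    have hxe : ∀ s : R, x * s * e = 0 :=
      (he e).mpr ⟨e, heidem.symm⟩
    -- e r e = r e
    have hre : ∀ r : R, e * r * e = r * e := by
      intro r
      obtain ⟨t, ht⟩ := (he (r * e)).mp (by
        intro s
        rw [← mul_assoc, mul_assoc x s r]
        exact hxe _)
      rw [mul_assoc, ht, ← mul_assoc, heidem, ← ht]
    -- e r e = e r
    have her : ∀ r : R, e * r * e = e * r := by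
      intro r
      have := congrArg star (hre (star r))
      simp only [star_mul, star_star, hestar] at this
      rw [mul_assoc]
      exact this
    have hcentral : ∀ r : R, e * r = r * e := fun r => (her r).symm.trans (hre r)
    -- f = u - e is the desired central projection
    refine ⟨u - e, ⟨?_, ?_⟩, ?_, ?_⟩
    · rw [mul_sub, sub_mul, sub_mul, huid, hleft, hright, heidem]
      abel
    · rw [star_sub, hestar, hustar]
    · intro r
      rw [sub_mul, mul_sub, hleft, hright, hcentral]
    · intro y
      constructor
      · intro hy
        obtain ⟨t, ht⟩ := (he y).mp hy
        intro r
        have hfy : (u - e) * y = 0 := by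
          rw [ht, sub_mul, hleft, ← mul_assoc, heidem, sub_self]
        have hc : (u - e) * r = r * (u - e) := by
          rw [sub_mul, mul_sub, hleft, hright, hcentral]
        rw [hc, mul_assoc, hfy, mul_zero]
      · intro hy
        have hfy : (u - e) * y = 0 := by
          have := hy u
          rwa [sub_mul, hright, hright] at this
        have hye : y = e * y := by
          have : u * y - e * y = 0 := by rw [← sub_mul]; exact hfy
          rw [hleft] at this
          exact (sub_eq_zero.mp this)
        exact (he y).mpr ⟨y, hye⟩
  · rintro ⟨⟨u, hu⟩, h⟩
    intro x
    obtain ⟨e, ⟨heidem, hestar⟩, hcentral, he⟩ := h x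
    have hustar : star u = u := by
      have h1 : ∀ y : R, y * star u = y := by
        intro y
        have := congrArg star ((hu (star y)).1)
        rwa [star_mul, star_star] at this
      rw [← (hu (star u)).1, h1]
    refine ⟨u - e, ⟨?_, ?_⟩, ?_⟩
    · rw [mul_sub, sub_mul, sub_mul, (hu u).1, (hu e).1, (hu e).2, heidem]
      abel
    · rw [star_sub, hestar, hustar]
    · intro y
      constructor
      · intro hy
        have hey : e * y = 0 := by
          have := (he y).mp hy u
          rwa [(hu e).2] at this
        exact ⟨y, by rw [sub_mul, (hu y).1, hey, sub_zero]⟩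
      · rintro ⟨t, rfl⟩
        apply (he _).mpr
        intro r
        have hef : e * ((u - e) * t) = 0 := by
          rw [← mul_assoc, mul_sub, (hu e).2, heidem, sub_self, zero_mul]
        rw [hcentral, mul_assoc, hef, mul_zero]
end

section
/- A *-ring R is a weakly p.q.-Baer *-ring if and only if R has a semi-proper involution and for each x ∈ R there exists a central projection e with r_R(xR) = r_R(eR). -/
/-- A *-ring `R` is weakly p.q.-Baer iff its involution is semi-proper and for each
`x` there exists a central projection `e` with `r_R(xR) = r_R(eR)`. -/
theorem weakly_pqBaer_iff_semiproper (R : Type*) [NonUnitalRing R] [StarRing R] :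
    (∀ x : R, ∃ e : R, (e * e = e ∧ star e = e) ∧ (∀ r : R, e * r = r * e) ∧
      x * e = x ∧
      (∀ f : R, (f * f = f ∧ star f = f) → (∀ r : R, f * r = r * f) → x * f = x →
        e * f = e) ∧
      (∀ y : R, (∀ r : R, x * r * y = 0) ↔ e * y = 0))
    ↔ ((∀ a : R, (∀ r : R, a * r * star a = 0) → a = 0) ∧
      ∀ x : R, ∃ e : R, (e * e = e ∧ star e = e) ∧ (∀ r : R, e * r = r * e) ∧
        ∀ y : R, (∀ r : R, x * r * y = 0) ↔ (∀ r : R, e * r * y = 0)) := by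
  constructor
  · intro h
    constructor
    · intro a ha
      obtain ⟨e, ⟨he1, he2⟩, hec, hae, _, hiff⟩ := h a
      have h1 : e * star a = 0 := (hiff (star a)).1 ha
      have h2 : a * e = 0 := by
        have := congrArg star h1
        simpa [star_mul, he2] using this
      rw [← hae, h2]
    · intro x
      obtain ⟨e, pe, hec, hxe, _, hiff⟩ := h x
      refine ⟨e, pe, hec, fun y => ⟨fun h' r => ?_, fun h' => ?_⟩⟩
      · rw [hec r, mul_assoc, (hiff y).1 h', mul_zero]
      · refine (hiff y).2 ?_
        have := h' e
        rwa [pe.1] at this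
  · rintro ⟨hsp, h⟩ x
    obtain ⟨e, ⟨he1, he2⟩, hec, hiff⟩ := h x
    have key : ∀ y : R, (∀ r : R, x * r * y = 0) ↔ e * y = 0 := by
      intro y
      constructor
      · intro hy
        have := (hiff y).1 hy e
        rwa [he1] at this
      · intro hy r
        refine (hiff y).2 (fun r => ?_) r
        rw [hec r, mul_assoc, hy, mul_zero]
    have hxe : x * e = x := by
      have ha : x - x * e = 0 := by
        apply hsp
        intro r
        have hstar : star (x - x * e) = star x - e * star x := by
          simp [star_sub, star_mul, he2]
        have he0 : e * star (x - x * e) = 0 := by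
          rw [hstar, mul_sub, ← mul_assoc, he1, sub_self]
        have hx0 : ∀ s : R, x * s * star (x - x * e) = 0 := (key _).2 he0
        have : (x - x * e) * r * star (x - x * e)
            = x * r * star (x - x * e) - x * (e * r) * star (x - x * e) := by
          noncomm_ring
        rw [this, hec r, ← mul_assoc x r e, mul_assoc (x * r) e, he0, mul_zero,
          hx0, sub_zero]
      have := sub_eq_zero.mp ha
      exact this.symm
    refine ⟨e, ⟨he1, he2⟩, hec, hxe, ?_, key⟩
    intro f ⟨hf1, hf2⟩ hfc hxf
    have hb : e * (e - e * f) = 0 := by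
      apply (key (e - e * f)).1
      intro r
      have h1 : x * r * e = x * r := by
        rw [mul_assoc, ← hec r, ← mul_assoc, hxe]
      have h2 : x * r * f = x * r := by
        rw [mul_assoc, ← hfc r, ← mul_assoc, hxf]
      rw [mul_sub, ← mul_assoc, h1, h2, sub_self]
    rw [mul_sub, he1, ← mul_assoc, he1] at hb
    exact (sub_eq_zero.mp hb).symm
end

section
/- A *-ring R is a p.q.-Baer *-ring if and only if R is a weakly p.q.-Baer *-ring having a unity element. -/
/-- A *-ring `R` is a p.q.-Baer *-ring iff `R` is a weakly p.q.-Baer *-ring with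
a unity element. -/
theorem pqBaer_iff_weakly_and_unity (R : Type*) [NonUnitalRing R] [StarRing R] :
    (∀ x : R, ∃ e : R, (e * e = e ∧ star e = e) ∧
      ∀ y : R, (∀ r : R, x * r * y = 0) ↔ ∃ t : R, y = e * t)
    ↔ ((∀ x : R, ∃ e : R, (e * e = e ∧ star e = e) ∧ (∀ r : R, e * r = r * e) ∧
        x * e = x ∧
        (∀ f : R, (f * f = f ∧ star f = f) → (∀ r : R, f * r = r * f) → x * f = x →
          e * f = e) ∧
        (∀ y : R, (∀ r : R, x * r * y = 0) ↔ e * y = 0)) ∧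
      (∃ u : R, ∀ x : R, u * x = x ∧ x * u = x)) := by
  constructor
  · intro h
    -- obtain a unity from the x = 0 case
    obtain ⟨u, ⟨huu, _⟩, hu⟩ := h 0
    have hL : ∀ y : R, u * y = y := by
      intro y
      obtain ⟨t, ht⟩ := (hu y).mp (fun r => by simp)
      rw [ht, ← mul_assoc, huu]
    have hR' : ∀ y : R, y * star u = y := by
      intro y
      calc y * star u = star (star (y * star u)) := (star_star _).symm
        _ = star (u * star y) := by rw [star_mul, star_star]
        _ = star (star y) := by rw [hL]
        _ = y := star_star y
    have hsu : star u = u := (hL (star u)).symm.trans (hR' u)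
    have hRid : ∀ y : R, y * u = y := fun y => by rw [← hsu]; exact hR' y
    refine ⟨fun x => ?_, ⟨u, fun y => ⟨hL y, hRid y⟩⟩⟩
    obtain ⟨e, ⟨hee, hse⟩, hiff⟩ := h x
    have hmem : ∀ y : R, (∃ t, y = e * t) → e * y = y := by
      rintro y ⟨t, rfl⟩; rw [← mul_assoc, hee]
    have hre : ∀ r : R, x * r * e = 0 := (hiff e).mpr ⟨e, hee.symm⟩
    -- e is central
    have hae : ∀ a : R, a * e = e * (a * e) := by
      intro a
      refine (hmem _ ((hiff (a * e)).mp fun r => ?_)).symm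
      rw [← mul_assoc, mul_assoc x r a]
      exact hre (r * a)
    have hea : ∀ a : R, e * a = e * a * e := by
      intro a
      calc e * a = star (star a * e) := by rw [star_mul, hse, star_star]
        _ = star (e * (star a * e)) := by rw [← hae (star a)]
        _ = star (star a * e) * star e := by rw [star_mul]
        _ = e * a * e := by rw [star_mul, hse, star_star]
    have hcomm : ∀ a : R, e * a = a * e := by
      intro a
      rw [hea a, hae a, mul_assoc]
    have hxe : x * e = 0 := by
      have := hre u; rwa [hRid] at this
    refine ⟨u - e, ⟨?_, ?_⟩, ?_, ?_, ?_, ?_⟩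
    · rw [sub_mul, mul_sub, mul_sub, hL e, hRid e, huu, hee, sub_self, sub_zero]
    · rw [star_sub, hsu, hse]
    · intro r
      rw [sub_mul, mul_sub, hL, hRid, hcomm]
    · rw [mul_sub, hRid, hxe, sub_zero]
    · rintro f ⟨hff, -⟩ hfc hxf
      have huf : ∀ r : R, x * r * (u - f) = 0 := by
        intro r
        rw [mul_sub, hRid, mul_assoc, ← hfc r, ← mul_assoc, hxf, sub_self]
      have h1 : e * (u - f) = u - f := hmem _ ((hiff _).mp huf)
      rw [mul_sub, hRid] at h1
      -- h1 : e - e * f = u - f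
      have h2 : e * f = e - (u - f) := by rw [← h1]; abel
      rw [sub_mul, hL, h2]; abel
    · intro y
      constructor
      · intro hy
        have hy' : e * y = y := hmem y ((hiff y).mp hy)
        rw [sub_mul, hL, hy', sub_self]
      · intro hy
        rw [sub_mul, hL, sub_eq_zero] at hy
        exact (hiff y).mpr ⟨y, hy⟩
  · rintro ⟨hw, u, hu⟩
    intro x
    obtain ⟨e, ⟨hee, hse⟩, hec, hxe, -, hiff⟩ := hw x
    have hsu : star u = u := by
      have h1 : ∀ y : R, y * star u = y := by
        intro y
        calc y * star u = star (star (y * star u)) := (star_star _).symm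
          _ = star (u * star y) := by rw [star_mul, star_star]
          _ = star (star y) := by rw [(hu (star y)).1]
          _ = y := star_star y
      exact ((hu (star u)).1).symm.trans (h1 u)
    refine ⟨u - e, ⟨?_, ?_⟩, fun y => ?_⟩
    · rw [sub_mul, mul_sub, mul_sub, (hu u).1, (hu e).1, (hu e).2, hee, sub_self,
        sub_zero]
    · rw [star_sub, hsu, hse]
    · constructor
      · intro hy
        have h1 : e * y = 0 := (hiff y).mp hy
        exact ⟨y, by rw [sub_mul, (hu y).1, h1, sub_zero]⟩
      · rintro ⟨t, rfl⟩
        apply (hiff _).mpr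
        rw [← mul_assoc, mul_sub, (hu e).2, hee, sub_self, zero_mul]
end

section
/- In a weakly p.q.-Baer *-ring R, for x, y ∈ R: xRy = 0 if and only if C(x)C(y) = 0, where C(x), C(y) denote central covers. -/
/-- In a weakly p.q.-Baer *-ring, `xRy = 0` iff `C(x) * C(y) = 0`. -/
theorem weakly_pqBaer_xRy_iff_covers (R : Type*) [NonUnitalRing R] [StarRing R]
    (hw : ∀ x : R, ∃ e : R, (e * e = e ∧ star e = e) ∧ (∀ r : R, e * r = r * e) ∧
      x * e = x ∧
      (∀ f : R, (f * f = f ∧ star f = f) → (∀ r : R, f * r = r * f) → x * f = x →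
        e * f = e) ∧
      (∀ y : R, (∀ r : R, x * r * y = 0) ↔ e * y = 0))
    (x y e f : R)
    (he : (e * e = e ∧ star e = e) ∧ (∀ r : R, e * r = r * e) ∧ x * e = x ∧
      (∀ g : R, (g * g = g ∧ star g = g) → (∀ r : R, g * r = r * g) → x * g = x →
        e * g = e) ∧
      (∀ z : R, (∀ r : R, x * r * z = 0) ↔ e * z = 0))
    (hf : (f * f = f ∧ star f = f) ∧ (∀ r : R, f * r = r * f) ∧ y * f = y ∧
      (∀ g : R, (g * g = g ∧ star g = g) → (∀ r : R, g * r = r * g) → y * g = y →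
        f * g = f) ∧
      (∀ z : R, (∀ r : R, y * r * z = 0) ↔ f * z = 0)) :
    (∀ r : R, x * r * y = 0) ↔ e * f = 0 := by
  obtain ⟨-, hec, -, -, heann⟩ := he
  obtain ⟨-, hfc, hyf, -, hfann⟩ := hf
  rw [heann]
  constructor
  · intro hey
    have hfe : f * e = 0 := (hfann e).mp (fun r => by
      rw [show y * r * e = e * (y * r) from (hec _).symm, ← mul_assoc, hey, zero_mul])
    rw [hec, hfe]
  · intro hef
    calc e * y = e * (y * f) := by rw [hyf]
    _ = y * (e * f) := by rw [← mul_assoc, hec, mul_assoc]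
    _ = 0 := by rw [hef, mul_zero]
end

section
/- Let R be a *-ring with semi-proper involution, K a commutative *-ring that is an integral domain, and R a *-algebra over K. Then the unitification R₁ = R ⊕ K, with multiplication (a,λ)(b,μ) = (ab + μa + λb, λμ) and involution (a,λ)* = (a*, λ*), also has a semi-proper involution. -/
/-- If `R` is a *-ring with semi-proper involution and `K` an integral domain with
involution over which `R` is a *-algebra, then the unitification `R₁ = R ⊕ K` also
has a semi-proper involution. -/
theorem unitization_semiproper (R K : Type*) [NonUnitalRing R] [StarRing R]
    [CommRing K] [IsDomain K] [StarRing K]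
    [Module K R] [IsScalarTower K R R] [SMulCommClass K R R] [StarModule K R]
    (hR : ∀ a : R, (∀ r : R, a * r * star a = 0) → a = 0) :
    ∀ s : Unitization K R, (∀ r : Unitization K R, s * r * star s = 0) → s = 0 := by
  intro s h
  have hfst : s.fst = 0 := by
    have h1 := congrArg (fun x : Unitization K R => x.fst) (h 1)
    simp [Unitization.fst_mul, Unitization.fst_star] at h1
    exact h1
  have hsnd : s.snd = 0 := by
    apply hR
    intro r
    have h2 := congrArg (fun x : Unitization K R => x.snd) (h (Unitization.inr r))
    simpa [Unitization.snd_mul, Unitization.fst_mul, hfst] using h2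
  ext
  · exact hfst
  · exact hsnd
end

section
/- Let R be a *-ring, K an integral domain with involution, R a *-algebra over K, and R₁ = R ⊕ K its unitification. For x ∈ R and a projection e ∈ R: e is the central cover of x in R (i.e., e is central, xe = x, and for all y ∈ R, xRy = 0 iff ey = 0) if and only if (e,0) is the central cover of (x,0) in R₁. -/
/-- For `x ∈ R` and a projection `e ∈ R`: `e` is the central cover of `x` in `R` iff
`(e, 0)` is the central cover of `(x, 0)` in the unitification `R₁ = R ⊕ K`. -/
theorem central_cover_unitization (R K : Type*) [NonUnitalRing R] [StarRing R]
    [CommRing K] [IsDomain K] [StarRing K]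
    [Module K R] [IsScalarTower K R R] [SMulCommClass K R R] [StarModule K R]
    (x e : R) (he : e * e = e ∧ star e = e) :
    ((∀ r : R, e * r = r * e) ∧ x * e = x ∧
      ∀ y : R, (∀ r : R, x * r * y = 0) ↔ e * y = 0)
    ↔ ((∀ r : Unitization K R,
          (Unitization.inr e : Unitization K R) * r = r * Unitization.inr e) ∧
        (Unitization.inr x : Unitization K R) * Unitization.inr e = Unitization.inr x ∧
        ∀ y : Unitization K R,
          (∀ r : Unitization K R, (Unitization.inr x : Unitization K R) * r * y = 0) ↔
            (Unitization.inr e : Unitization K R) * y = 0) := by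
  obtain ⟨hee, -⟩ := he
  constructor
  · rintro ⟨hc, hxe, hcov⟩
    refine ⟨?_, ?_, ?_⟩
    · intro r
      refine Unitization.ext ?_ ?_ <;>
        simp [mul_comm, hc r.snd]
    · rw [← Unitization.inr_mul, hxe]
    · intro y
      constructor
      · intro h
        -- derive e * y = 0
        have key : ∀ r : R, x * r * (y.fst • e + e * y.snd) = 0 := by
          intro r
          have h2 := congrArg (fun z : Unitization K R => z.snd) (h (Unitization.inr (r * e)))
          simp only [Unitization.snd_mul, Unitization.fst_mul, Unitization.fst_inr,
            Unitization.snd_inr, zero_mul, zero_smul, add_zero, zero_add,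
            Unitization.snd_zero, smul_zero] at h2
          have : x * r * (y.fst • e + e * y.snd)
              = y.fst • (x * (r * e)) + x * (r * e) * y.snd := by
            rw [mul_add, mul_smul_comm, mul_assoc, mul_assoc, mul_assoc,
              ← mul_assoc r e y.snd]
          rw [this, h2]
        have h3 := (hcov _).mp key
        have h4 : e * (y.fst • e + e * y.snd) = y.fst • e + e * y.snd := by
          rw [mul_add, mul_smul_comm, hee, ← mul_assoc, hee]
        rw [h4] at h3
        refine Unitization.ext ?_ ?_ <;>
          simp [h3]
      · intro h r
        have hb : y.fst • e + e * y.snd = 0 := by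
          have := congrArg (fun z : Unitization K R => z.snd) h
          simpa using this
        -- x * c * y.snd = -(y.fst • (x * c)) for c with x*c*e = x*c; generally:
        have hxb : ∀ c : R, (x * c) * y.snd = -(y.fst • (x * c)) := by
          intro c
          have h1 : x * c = x * c * e := by
            rw [mul_assoc, ← hc c, ← mul_assoc, hxe]
          calc x * c * y.snd = x * c * (e * y.snd) := by
                conv_lhs => rw [h1]
                rw [mul_assoc]
              _ = x * c * (-(y.fst • e)) := by rw [eq_neg_of_add_eq_zero_right hb]
              _ = -(y.fst • (x * c * e)) := by rw [mul_neg, mul_smul_comm]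
              _ = -(y.fst • (x * c)) := by rw [← h1]
        have hx2 : x * y.snd = -(y.fst • x) := by
          have h1 : x = x * e := hxe.symm
          calc x * y.snd = x * (e * y.snd) := by
                conv_lhs => rw [h1]
                rw [mul_assoc]
            _ = x * (-(y.fst • e)) := by rw [eq_neg_of_add_eq_zero_right hb]
            _ = -(y.fst • (x * e)) := by rw [mul_neg, mul_smul_comm]
            _ = -(y.fst • x) := by rw [hxe]
        refine Unitization.ext ?_ ?_
        · simp
        · simp only [Unitization.snd_mul, Unitization.fst_mul, Unitization.fst_inr,
            Unitization.snd_inr, zero_mul, zero_smul, add_zero, zero_add,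
            Unitization.snd_zero, smul_zero, smul_add, add_mul]
          rw [smul_mul_assoc, hx2, hxb r.snd, smul_neg, smul_smul, smul_smul,
            mul_comm y.fst r.fst]
          abel
  · rintro ⟨hc, hxe, hcov⟩
    have hcR : ∀ r : R, e * r = r * e := by
      intro r
      have := congrArg (fun z : Unitization K R => z.snd) (hc (Unitization.inr r))
      simpa using this
    have hxeR : x * e = x := by
      rw [← Unitization.inr_mul] at hxe
      exact Unitization.inr_injective hxe
    refine ⟨hcR, hxeR, ?_⟩
    intro y
    constructor
    · intro h
      have hxy : x * y = 0 := by
        have h1 : ∀ r : Unitization K R,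
            (Unitization.inr x : Unitization K R) * r * Unitization.inr (x * y) = 0 := by
          intro r
          refine Unitization.ext ?_ ?_
          · simp
          · simp only [Unitization.snd_mul, Unitization.fst_mul, Unitization.fst_inr,
              Unitization.snd_inr, zero_mul, zero_smul, add_zero, zero_add,
              Unitization.snd_zero, smul_zero, smul_add, add_mul]
            have e1 : x * (x * y) = 0 := by rw [← mul_assoc]; exact h x
            have e2 : x * r.snd * (x * y) = 0 := by
              rw [← mul_assoc, mul_assoc x r.snd x]; exact h (r.snd * x)
            rw [smul_mul_assoc, e1, e2]
            simp
        have h2 := (hcov _).mp h1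
        have h3 := congrArg (fun z : Unitization K R => z.snd) h2
        simp only [Unitization.snd_mul, Unitization.fst_mul, Unitization.fst_inr,
          Unitization.snd_inr, zero_mul, zero_smul, add_zero, zero_add,
          Unitization.snd_zero] at h3
        rwa [← mul_assoc, hcR x, hxeR] at h3
      have h1 : ∀ r : Unitization K R,
          (Unitization.inr x : Unitization K R) * r * Unitization.inr y = 0 := by
        intro r
        refine Unitization.ext ?_ ?_
        · simp
        · simp only [Unitization.snd_mul, Unitization.fst_mul, Unitization.fst_inr,
            Unitization.snd_inr, zero_mul, zero_smul, add_zero, zero_add,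
            Unitization.snd_zero, smul_zero, add_mul]
          rw [smul_mul_assoc, hxy, h r.snd]
          simp
      have h2 := congrArg (fun z : Unitization K R => z.snd) ((hcov _).mp h1)
      simpa using h2
    · intro h r
      have h0 : (Unitization.inr e : Unitization K R) * Unitization.inr y = 0 := by
        rw [← Unitization.inr_mul, h, Unitization.inr_zero]
      have := (hcov (Unitization.inr y)).mpr h0 (Unitization.inr r)
      rw [← Unitization.inr_mul, ← Unitization.inr_mul] at this
      have h2 := congrArg (fun z : Unitization K R => z.snd) this
      simpa using h2
end
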